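/- The locally T-optimal discrimination criterion T(ξ, θ2) = min over θ1 of ∫ (η1(x,θ1) - η2(x,θ2))^2 dξ(x), for two nested linear models η1(x,θ1) = Σ_{i=0}^{m1-1} θ_{1,i} f_i(x) and η2(x,θ2) = Σ_{i=0}^{m2-1} θ_{2,i} f_i(x) with m2 > m1, equals θ_{2,m}^2 · (b^T, 1) M_(s)(ξ) (b^T, 1)^T, where m = m2 - 1, s = m2 - m1, and b_i = θ_{2,m-s+i}/θ_{2,m} (i = 1,…,s-1), assuming θ_{2,m} ≠ 0 and that M11(ξ)X = M12(ξ) has a solution. -/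

import Mathlib

open Matrix

/-- For nested linear models `η1(x,θ1) = Σ_{i<m1} θ1_i f_i(x)` and
`η2(x,θ2) = Σ_{i<m2} θ2_i f_i(x)` (`m1 < m2`) and a finitely supported design,
the locally T-optimal criterion
`T(ξ,θ2) = min_{θ1} ∫ (η1 - η2)² dξ` equals
`θ_{2,m}² · (bᵀ,1) M_(s)(ξ) (bᵀ,1)ᵀ` with `m = m2-1`, `s = m2-m1`,
`b_j = θ_{2,m1+j}/θ_{2,m}`, provided `θ_{2,m} ≠ 0` and `M11(ξ) X = M12(ξ)`
has a solution. -/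
lemma bilinear_sum_swap {N a b : ℕ} (w : Fin N → ℝ)
    (g : Fin a → Fin N → ℝ) (h : Fin b → Fin N → ℝ)
    (u : Fin a → ℝ) (v : Fin b → ℝ) :
    (∑ n, w n * ((∑ i, u i * g i n) * (∑ j, v j * h j n)))
      = ∑ i, u i * ∑ j, (∑ n, w n * g i n * h j n) * v j := by
  simp only [Finset.mul_sum, Finset.sum_mul]
  rw [show (∑ n : Fin N, ∑ j : Fin b, ∑ i : Fin a, w n * (u i * g i n * (v j * h j n)))
      = ∑ n : Fin N, ∑ i : Fin a, ∑ j : Fin b, w n * (u i * g i n * (v j * h j n))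
    from Finset.sum_congr rfl fun n _ => Finset.sum_comm ..]
  rw [Finset.sum_comm]
  refine Finset.sum_congr rfl fun i _ => ?_
  rw [Finset.sum_comm]
  exact Finset.sum_congr rfl fun j _ => Finset.sum_congr rfl fun n _ => by ring


theorem T_criterion_eq_schur_quadform {k N m1 m2 : ℕ} (hm : m1 < m2)
    (D : Set (Fin k → ℝ)) (hD : IsCompact D)
    (x : Fin N → (Fin k → ℝ)) (hx : ∀ n, x n ∈ D)
    (w : Fin N → ℝ) (hw : ∀ n, 0 ≤ w n) (hw1 : ∑ n, w n = 1)
    (f : Fin m2 → (Fin k → ℝ) → ℝ) (hf : ∀ i, ContinuousOn (f i) D)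
    (θ2 : Fin m2 → ℝ) (hθ : θ2 ⟨m2 - 1, by omega⟩ ≠ 0)
    (e : Fin (m2 - m1) → Fin m2)
    (he : e = fun j => ⟨m1 + j.1, by have := j.isLt; omega⟩)
    (M11 : Matrix (Fin m1) (Fin m1) ℝ)
    (hM11 : M11 = Matrix.of fun i j =>
      ∑ n, w n * f (Fin.castLE hm.le i) (x n) * f (Fin.castLE hm.le j) (x n))
    (M12 : Matrix (Fin m1) (Fin (m2 - m1)) ℝ)
    (hM12 : M12 = Matrix.of fun i j =>
      ∑ n, w n * f (Fin.castLE hm.le i) (x n) * f (e j) (x n))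
    (M22 : Matrix (Fin (m2 - m1)) (Fin (m2 - m1)) ℝ)
    (hM22 : M22 = Matrix.of fun i j => ∑ n, w n * f (e i) (x n) * f (e j) (x n))
    (X : Matrix (Fin m1) (Fin (m2 - m1)) ℝ) (hX : M11 * X = M12)
    (c : Fin (m2 - m1) → ℝ)
    (hc : c = fun j => θ2 (e j) / θ2 ⟨m2 - 1, by omega⟩) :
    IsLeast
      {v : ℝ | ∃ θ1 : Fin m1 → ℝ,
        v = ∑ n, w n *
          ((∑ i : Fin m1, θ1 i * f (Fin.castLE hm.le i) (x n)) -
            (∑ i : Fin m2, θ2 i * f i (x n)))^2}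
      ((θ2 ⟨m2 - 1, by omega⟩)^2 * (c ⬝ᵥ ((M22 - Xᵀ * M11 * X) *ᵥ c))) := by
  have hs : m1 + (m2 - m1) = m2 := by omega
  set t : ℝ := θ2 ⟨m2 - 1, by omega⟩ with ht
  set F : (Fin m1 → ℝ) → Fin N → ℝ :=
    fun v n => ∑ i, v i * f (Fin.castLE hm.le i) (x n) with hF
  set G : Fin N → ℝ := fun n => ∑ j, c j * f (e j) (x n) with hG
  -- splitting a sum over Fin m2
  have hsplit : ∀ g : Fin m2 → ℝ, (∑ i, g i) =
      (∑ i : Fin m1, g (Fin.castLE hm.le i)) + ∑ j : Fin (m2 - m1), g (e j) := by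
    intro g
    rw [← Equiv.sum_comp (finCongr hs) g, Fin.sum_univ_add]
    congr 1
    all_goals exact Finset.sum_congr rfl fun i _ => congrArg g (Fin.ext (by simp [he]))
  -- bilinear identities
  have hBil : ∀ u v : Fin m1 → ℝ,
      (∑ n, w n * (F u n * F v n)) = u ⬝ᵥ (M11 *ᵥ v) := by
    intro u v
    rw [hF, bilinear_sum_swap w (fun i n => f (Fin.castLE hm.le i) (x n))
      (fun j n => f (Fin.castLE hm.le j) (x n)) u v]
    simp only [hM11, dotProduct, mulVec, of_apply]
  have hBX : ∀ u : Fin m1 → ℝ,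
      (∑ n, w n * (F u n * G n)) = u ⬝ᵥ (M12 *ᵥ c) := by
    intro u
    rw [hF, hG, bilinear_sum_swap w (fun i n => f (Fin.castLE hm.le i) (x n))
      (fun j n => f (e j) (x n)) u c]
    simp only [hM12, dotProduct, mulVec, of_apply]
  have hGG : (∑ n, w n * (G n * G n)) = c ⬝ᵥ (M22 *ᵥ c) := by
    rw [hG, bilinear_sum_swap w (fun i n => f (e i) (x n))
      (fun j n => f (e j) (x n)) c c]
    simp only [hM22, dotProduct, mulVec, of_apply]
  have h1 : M11 *ᵥ (X *ᵥ c) = M12 *ᵥ c := by rw [mulVec_mulVec, hX]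
  have htc : ∀ j, t * c j = θ2 (e j) := by
    intro j; rw [hc]; field_simp
  -- key identity
  have key : ∀ θ1 : Fin m1 → ℝ,
      (∑ n, w n *
        ((∑ i : Fin m1, θ1 i * f (Fin.castLE hm.le i) (x n)) -
          (∑ i : Fin m2, θ2 i * f i (x n)))^2)
      = (∑ n, w n *
          (F (fun i => θ1 i - θ2 (Fin.castLE hm.le i) - t * (X *ᵥ c) i) n)^2)
        + t^2 * (c ⬝ᵥ ((M22 - Xᵀ * M11 * X) *ᵥ c)) := by
    intro θ1
    set β : Fin m1 → ℝ := fun i => θ1 i - θ2 (Fin.castLE hm.le i) - t * (X *ᵥ c) i with hβ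
    have hA : ∀ n, (∑ i : Fin m1, θ1 i * f (Fin.castLE hm.le i) (x n)) -
        (∑ i : Fin m2, θ2 i * f i (x n))
        = F β n + t * F (X *ᵥ c) n - t * G n := by
      intro n
      rw [hsplit (fun i => θ2 i * f i (x n))]
      have h2 : ∀ j, θ2 (e j) * f (e j) (x n) = t * (c j * f (e j) (x n)) := by
        intro j; rw [← htc j]; ring
      simp only [h2]
      rw [← Finset.mul_sum]
      have hC : F β n = (∑ i : Fin m1, θ1 i * f (Fin.castLE hm.le i) (x n))
          - (∑ i : Fin m1, θ2 (Fin.castLE hm.le i) * f (Fin.castLE hm.le i) (x n))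
          - t * F (X *ᵥ c) n := by
        simp only [hF, hβ, Finset.mul_sum, ← Finset.sum_sub_distrib]
        exact Finset.sum_congr rfl fun i _ => by ring
      rw [hC]; simp only [hG, hF]; ring
    have expand : ∀ n, w n *
        ((∑ i : Fin m1, θ1 i * f (Fin.castLE hm.le i) (x n)) -
          (∑ i : Fin m2, θ2 i * f i (x n)))^2
        = w n * (F β n)^2
          + (2*t) * (w n * (F β n * F (X *ᵥ c) n))
          - (2*t) * (w n * (F β n * G n))
          + t^2 * (w n * (F (X *ᵥ c) n * F (X *ᵥ c) n))
          - (2*t^2) * (w n * (F (X *ᵥ c) n * G n))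
          + t^2 * (w n * (G n * G n)) := by
      intro n; rw [hA n]; ring
    rw [Finset.sum_congr rfl fun n _ => expand n]
    rw [Finset.sum_add_distrib, Finset.sum_sub_distrib, Finset.sum_add_distrib,
      Finset.sum_sub_distrib, Finset.sum_add_distrib,
      ← Finset.mul_sum, ← Finset.mul_sum, ← Finset.mul_sum, ← Finset.mul_sum, ← Finset.mul_sum]
    have hFsq : ∀ u : Fin m1 → ℝ, (∑ n, w n * (F u n)^2) = ∑ n, w n * (F u n * F u n) :=
      fun u => Finset.sum_congr rfl fun n _ => by ring
    rw [hFsq, hBil β (X *ᵥ c), hBX β, hBil (X *ᵥ c) (X *ᵥ c), hBX (X *ᵥ c), hGG, h1,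
      ← hFsq]
    have h3 : c ⬝ᵥ ((M22 - Xᵀ * M11 * X) *ᵥ c)
        = c ⬝ᵥ (M22 *ᵥ c) - (X *ᵥ c) ⬝ᵥ (M12 *ᵥ c) := by
      rw [sub_mulVec, dotProduct_sub]
      congr 1
      rw [Matrix.mul_assoc, ← mulVec_mulVec, dotProduct_mulVec, vecMul_transpose, hX]
    rw [h3]
    ring
  constructor
  · refine ⟨fun i => θ2 (Fin.castLE hm.le i) + t * (X *ᵥ c) i, ?_⟩
    rw [key]
    rw [right_eq_add]
    refine Finset.sum_eq_zero fun n _ => ?_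
    have h0 : F (fun i => (θ2 (Fin.castLE hm.le i) + t * (X *ᵥ c) i)
        - θ2 (Fin.castLE hm.le i) - t * (X *ᵥ c) i) n = 0 := by
      rw [hF]
      exact Finset.sum_eq_zero fun i _ => by ring
    rw [h0]; ring
  · rintro v ⟨θ1, rfl⟩
    rw [key θ1]
    have h4 : 0 ≤ ∑ n, w n *
        (F (fun i => θ1 i - θ2 (Fin.castLE hm.le i) - t * (X *ᵥ c) i) n)^2 :=
      Finset.sum_nonneg fun n _ => mul_nonneg (hw n) (sq_nonneg _)
    linarith
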